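/- arXiv:2403.20166 — 7 statements merged into one kernel-verified Lean document; each statement's English description precedes it below -/
import Mathlib

section
/- Let E be a connected metric space, let U ⊆ E be an open set, let p ∈ U, and suppose that U \ {p} is a connected set. Then E \ {p} is also connected. -/
noncomputable section

/-- The Euclidean plane. -/
abbrev Plane := EuclideanSpace ℝ (Fin 2)

/-- Points `p` and `q` are `δ`-chained in `A`: there is a finite sequence of points of `A`
from `p` to `q` with consecutive distances `< δ`. -/
def IsChainedPts (δ : ℝ) (A : Set Plane) (p q : Plane) : Prop :=
  ∃ n : ℕ, ∃ r : Fin (n + 1) → Plane, (∀ i, r i ∈ A) ∧ r 0 = p ∧ r (Fin.last n) = q ∧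
    ∀ i : Fin n, dist (r i.castSucc) (r i.succ) < δ

/-- A set is `δ`-chained iff any two of its points are `δ`-chained in it. -/
def IsChainedSet (δ : ℝ) (A : Set Plane) : Prop :=
  ∀ p ∈ A, ∀ q ∈ A, IsChainedPts δ A p q

/-- The `δ`-chained component of the point `p` in the set `M`. -/
def chainedComponent (δ : ℝ) (M : Set Plane) (p : Plane) : Set Plane :=
  {q | q ∈ M ∧ IsChainedPts δ M p q}

/-- Distance `ρ(A, B)` between two sets: infimum of pairwise distances. -/
def setRho (A B : Set Plane) : ℝ :=
  sInf {d : ℝ | ∃ a ∈ A, ∃ b ∈ B, d = dist a b}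

/-- `D` is a connected component of the subspace `S`. -/
def IsConnCompOf {X : Type*} [TopologicalSpace X] (S D : Set X) : Prop :=
  ∃ x ∈ S, connectedComponentIn S x = D

/-- A simple closed curve: a subset of the plane homeomorphic to the unit circle. -/
def IsSimpleClosedCurve (C : Set Plane) : Prop :=
  Nonempty (C ≃ₜ (Metric.sphere (0 : Plane) 1 : Set Plane))

/-- A simple closed curve `C` separates `A` and `B` iff they lie in two different
connected components of the complement of `C`. -/
def Separates (C A B : Set Plane) : Prop :=
  ∃ D E : Set Plane, IsConnCompOf Cᶜ D ∧ IsConnCompOf Cᶜ E ∧ D ≠ E ∧ A ⊆ D ∧ B ⊆ E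

lemma aux_clopen {E : Type*} [MetricSpace E] [ConnectedSpace E]
    (U : Set E) (hU : IsOpen U) (p : E) (hp : p ∈ U)
    (u v : Set E) (hu : IsOpen u) (hv : IsOpen v)
    (hsub : ({p}ᶜ : Set E) ⊆ u ∪ v)
    (hns : ({p}ᶜ : Set E) ∩ (u ∩ v) = ∅)
    (hAu : U \ {p} ⊆ u)
    (b : E) (hb : b ∈ ({p}ᶜ : Set E) ∩ v) : False := by
  set W : Set E := v ∩ {p}ᶜ with hW
  have hWopen : IsOpen W := hv.inter (isOpen_compl_singleton)
  have hWclosed : IsClosed W := by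
    rw [← closure_subset_iff_isClosed]
    intro x hx
    by_cases hxp : x = p
    · exfalso
      have hUnhds : U ∈ nhds x := by rw [hxp]; exact hU.mem_nhds hp
      obtain ⟨y, hyU, hyW⟩ := mem_closure_iff_nhds.mp hx U hUnhds
      have hyA : y ∈ U \ {p} := ⟨hyU, hyW.2⟩
      have : y ∈ ({p}ᶜ : Set E) ∩ (u ∩ v) := ⟨hyW.2, hAu hyA, hyW.1⟩
      rw [hns] at this
      exact this
    · have hxc : x ∈ ({p}ᶜ : Set E) := hxp
      rcases hsub hxc with hxu | hxv
      · exfalso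
        obtain ⟨y, hyu, hyW⟩ := mem_closure_iff_nhds.mp hx u (hu.mem_nhds hxu)
        have : y ∈ ({p}ᶜ : Set E) ∩ (u ∩ v) := ⟨hyW.2, hyu, hyW.1⟩
        rw [hns] at this
        exact this
      · exact ⟨hxv, hxc⟩
  rcases isClopen_iff.mp ⟨hWclosed, hWopen⟩ with h | h
  · have : b ∈ W := ⟨hb.2, hb.1⟩
    rw [h] at this; exact this
  · have : p ∈ W := h ▸ Set.mem_univ p
    exact this.2 rfl

theorem stmt_0 {E : Type*} [MetricSpace E] [ConnectedSpace E]
    (U : Set E) (hU : IsOpen U) (p : E) (hp : p ∈ U)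
    (hconn : IsPreconnected (U \ {p})) :
    IsPreconnected ({p}ᶜ : Set E) := by
  rintro u v hu hv hsub ⟨a, ha⟩ ⟨b, hb⟩
  by_contra hne
  rw [Set.not_nonempty_iff_eq_empty] at hne
  -- U \ {p} is nonempty, else {p} is open and E = {p}, contradicting a ∈ {p}ᶜ
  rcases Set.eq_empty_or_nonempty (U \ {p}) with hA | hA
  · have hUp : U = {p} := by
      apply Set.Subset.antisymm
      · intro x hx
        by_contra hxp
        exact (Set.eq_empty_iff_forall_notMem.mp hA x) ⟨hx, hxp⟩
      · intro x hx
        rw [Set.mem_singleton_iff] at hx; subst hx; exact hp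
    have hclopen : IsClopen ({p} : Set E) := ⟨isClosed_singleton, hUp ▸ hU⟩
    rcases isClopen_iff.mp hclopen with h | h
    · exact (Set.eq_empty_iff_forall_notMem.mp h p) rfl
    · exact ha.1 (h ▸ Set.mem_univ a)
  -- U \ {p} is contained in u or in v
  have hsubA : U \ {p} ⊆ u ∪ v := fun x hx => hsub hx.2
  have hor : U \ {p} ⊆ u ∨ U \ {p} ⊆ v := by
    by_contra h
    push_neg at h
    obtain ⟨x, hx, hxu⟩ := Set.not_subset.mp h.1
    obtain ⟨y, hy, hyv⟩ := Set.not_subset.mp h.2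
    have hxv : x ∈ v := (hsubA hx).resolve_left hxu
    have hyu : y ∈ u := (hsubA hy).resolve_right hyv
    obtain ⟨z, hz⟩ := hconn u v hu hv hsubA ⟨y, hy, hyu⟩ ⟨x, hx, hxv⟩
    have : z ∈ ({p}ᶜ : Set E) ∩ (u ∩ v) := ⟨hz.1.2, hz.2⟩
    rw [hne] at this
    exact this
  rcases hor with hAu | hAv
  · exact aux_clopen U hU p hp u v hu hv hsub hne hAu b ⟨hb.1, hb.2⟩
  · have hns' : ({p}ᶜ : Set E) ∩ (v ∩ u) = ∅ := by rwa [Set.inter_comm v u]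
    exact aux_clopen U hU p hp v u hv hu (fun x hx => (hsub hx).symm) hns' hAv a ⟨ha.1, ha.2⟩
end
end

section
/- Let ε > 0 and let A be a nonempty bounded 2ε-chained subset of the Euclidean plane ℝ². Let D be a connected component of the complement ℝ² \ B_ε(A) of the closed ε-neighbourhood of A. Then D is a connected component of the complement ℝ² \ ∂D of its own frontier ∂D. -/
noncomputable section

theorem stmt_4 (ε : ℝ) (hε : 0 < ε) (A : Set Plane) (hA : A.Nonempty)
    (hbdd : Bornology.IsBounded A) (hch : IsChainedSet (2 * ε) A)
    (D : Set Plane)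
    (hD : IsConnCompOf ({p : Plane | Metric.infDist p A ≤ ε}ᶜ) D) :
    IsConnCompOf ((frontier D)ᶜ) D := by
  obtain ⟨x, hx, hcomp⟩ := hD
  have hSopen : IsOpen ({p : Plane | Metric.infDist p A ≤ ε}ᶜ) := by
    have : IsClosed {p : Plane | Metric.infDist p A ≤ ε} :=
      isClosed_le (Metric.continuous_infDist_pt A) continuous_const
    exact this.isOpen_compl
  have hDopen : IsOpen D := hcomp ▸ hSopen.connectedComponentIn
  have hxD : x ∈ D := hcomp ▸ mem_connectedComponentIn hx
  have hDpre : IsPreconnected D := hcomp ▸ (isPreconnected_connectedComponentIn)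
  have hdisj : D ∩ frontier D = ∅ := by
    rw [hDopen.frontier_eq]
    ext p; simp only [Set.mem_inter_iff, Set.mem_diff, Set.mem_empty_iff_false, iff_false]
    rintro ⟨hp, _, hnp⟩; exact hnp hp
  have hDsub : D ⊆ (frontier D)ᶜ := fun p hp hpf =>
    Set.eq_empty_iff_forall_notMem.mp hdisj p ⟨hp, hpf⟩
  have hxF : x ∈ (frontier D)ᶜ := hDsub hxD
  refine ⟨x, hxF, ?_⟩
  apply Set.Subset.antisymm
  · -- component ⊆ D
    have hcopen : IsOpen (closure D)ᶜ := isClosed_closure.isOpen_compl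
    have hdis : Disjoint D (closure D)ᶜ := by
      rw [Set.disjoint_compl_right_iff_subset]; exact subset_closure
    have hsub : connectedComponentIn (frontier D)ᶜ x ⊆ D ∪ (closure D)ᶜ := by
      intro p hp
      have := connectedComponentIn_subset (frontier D)ᶜ x hp
      simp only [Set.mem_compl_iff, frontier, Set.mem_diff, hDopen.interior_eq] at this
      by_cases hpD : p ∈ D
      · exact Or.inl hpD
      · exact Or.inr (fun hc => this ⟨hc, hpD⟩)
    exact (isPreconnected_connectedComponentIn).subset_left_of_subset_union hDopen hcopen
      hdis hsub ⟨x, mem_connectedComponentIn hxF, hxD⟩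
  · exact hDpre.subset_connectedComponentIn hxD hDsub
end
end

section
/- Let A and B be nonempty subsets of the Euclidean plane ℝ² with ρ(A, B) > 0, where A is bounded. Then every simple closed curve C' that separates A and B satisfies ρ(C', A ∪ B) ≤ ρ(A, B)/2. -/
noncomputable section

theorem stmt_10 (A B : Set Plane) (hA : A.Nonempty) (hB : B.Nonempty)
    (hρ : 0 < setRho A B) (hbdd : Bornology.IsBounded A)
    (C' : Set Plane) (hC' : IsSimpleClosedCurve C') (hsep : Separates C' A B) :
    setRho C' (A ∪ B) ≤ setRho A B / 2 := by
  apply le_of_forall_pos_le_add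
  intro ε hε
  -- pick nearly optimal a, b
  have hne : {d : ℝ | ∃ a ∈ A, ∃ b ∈ B, d = dist a b}.Nonempty := by
    obtain ⟨a, ha⟩ := hA; obtain ⟨b, hb⟩ := hB
    exact ⟨dist a b, a, ha, b, hb, rfl⟩
  have hlt : setRho A B < setRho A B + 2 * ε := by linarith
  obtain ⟨d, ⟨a, ha, b, hb, rfl⟩, hd⟩ := exists_lt_of_csInf_lt hne hlt
  -- the segment from a to b meets C'
  obtain ⟨D, E, ⟨x, hx, hxD⟩, ⟨y, hy, hyE⟩, hDE, hAD, hBE⟩ := hsep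
  have hseg : ∃ c ∈ segment ℝ a b, c ∈ C' := by
    by_contra hcon
    push_neg at hcon
    have hsub : segment ℝ a b ⊆ C'ᶜ := fun z hz => hcon z hz
    have hconn : IsPreconnected (segment ℝ a b) := (convex_segment a b).isPreconnected
    have hsub2 : segment ℝ a b ⊆ connectedComponentIn C'ᶜ a :=
      hconn.subset_connectedComponentIn (left_mem_segment ℝ a b) hsub
    have hbmem : b ∈ connectedComponentIn C'ᶜ a := hsub2 (right_mem_segment ℝ a b)
    have haD : a ∈ D := hAD ha
    have hbE : b ∈ E := hBE hb
    have h1 : connectedComponentIn C'ᶜ x = connectedComponentIn C'ᶜ a := by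
      apply connectedComponentIn_eq
      rw [hxD]; exact haD
    have h2 : connectedComponentIn C'ᶜ y = connectedComponentIn C'ᶜ b := by
      apply connectedComponentIn_eq
      rw [hyE]; exact hbE
    have h3 : connectedComponentIn C'ᶜ a = connectedComponentIn C'ᶜ b :=
      connectedComponentIn_eq hbmem
    exact hDE (by rw [← hxD, ← hyE, h1, h2, h3])
  obtain ⟨c, hcseg, hcC⟩ := hseg
  have hdist : dist a c + dist c b = dist a b := dist_add_dist_of_mem_segment hcseg
  have hbdd0 : BddBelow {d : ℝ | ∃ x ∈ C', ∃ y ∈ A ∪ B, d = dist x y} := by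
    refine ⟨0, ?_⟩
    rintro d ⟨x, _, y, _, rfl⟩
    exact dist_nonneg
  have h1 : setRho C' (A ∪ B) ≤ dist c a :=
    csInf_le hbdd0 ⟨c, hcC, a, Or.inl ha, rfl⟩
  have h2 : setRho C' (A ∪ B) ≤ dist c b :=
    csInf_le hbdd0 ⟨c, hcC, b, Or.inr hb, rfl⟩
  have : dist c a = dist a c := dist_comm c a
  linarith [min_le_left (dist c a) (dist c b), min_le_right (dist c a) (dist c b)]
end
end

section
/- Let ε > 0 and let A be a nonempty subset of the Euclidean plane ℝ². If A is 2ε-chained, then the open ε-neighbourhood O_ε(A) = {p ∈ ℝ² : dist(p, A) < ε} is path-connected. -/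
noncomputable section

theorem stmt_13 (ε : ℝ) (hε : 0 < ε) (A : Set Plane) (hA : A.Nonempty)
    (hch : IsChainedSet (2 * ε) A) :
    IsPathConnected {p : Plane | Metric.infDist p A < ε} := by
  set U : Set Plane := {p : Plane | Metric.infDist p A < ε} with hU
  have hmemA : ∀ a ∈ A, a ∈ U := by
    intro a ha
    simp only [hU, Set.mem_setOf_eq]
    calc Metric.infDist a A ≤ dist a a := Metric.infDist_le_dist_of_mem ha
    _ = 0 := dist_self a
    _ < ε := hε
  -- segment between two points of A at distance < 2ε lies in U
  have hseg : ∀ a ∈ A, ∀ b ∈ A, dist a b < 2 * ε → JoinedIn U a b := by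
    intro a ha b hb hd
    apply JoinedIn.of_segment_subset
    intro x hx
    have hsum : dist a x + dist x b = dist a b := dist_add_dist_of_mem_segment hx
    simp only [hU, Set.mem_setOf_eq]
    rcases le_or_gt (dist a x) (dist x b) with h | h
    · have : dist x a < ε := by rw [dist_comm]; linarith
      exact lt_of_le_of_lt (Metric.infDist_le_dist_of_mem ha) this
    · have : dist x b < ε := by linarith
      exact lt_of_le_of_lt (Metric.infDist_le_dist_of_mem hb) this
  -- chained points of A are joined in U
  have hchain : ∀ a ∈ A, ∀ b ∈ A, JoinedIn U a b := by
    intro a ha b hb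
    obtain ⟨n, r, hr, h0, hl, hstep⟩ := hch a ha b hb
    have key : ∀ i : Fin (n + 1), JoinedIn U (r 0) (r i) := by
      intro i
      induction i using Fin.induction with
      | zero => exact JoinedIn.refl (hmemA _ (hr 0))
      | succ i ih =>
          exact ih.trans (hseg _ (hr i.castSucc) _ (hr i.succ) (hstep i))
    have := key (Fin.last n)
    rwa [h0, hl] at this
  -- main
  obtain ⟨a0, ha0⟩ := hA
  refine ⟨a0, hmemA a0 ha0, ?_⟩
  intro p hp
  have hp' : Metric.infDist p A < ε := hp
  obtain ⟨a, ha, hpa⟩ := (Metric.infDist_lt_iff ⟨a0, ha0⟩).1 hp'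
  have hpaU : JoinedIn U p a := by
    apply JoinedIn.of_segment_subset
    intro x hx
    have hsub : segment ℝ p a ⊆ Metric.closedBall a (dist p a) := by
      apply (convex_closedBall a (dist p a)).segment_subset
      · exact Metric.mem_closedBall.2 le_rfl
      · exact Metric.mem_closedBall.2 (by simp [dist_nonneg])
    have : dist x a ≤ dist p a := hsub hx
    simp only [hU, Set.mem_setOf_eq]
    exact lt_of_le_of_lt (Metric.infDist_le_dist_of_mem ha) (lt_of_le_of_lt this hpa)
  exact (hchain a0 ha0 a ha).trans hpaU.symm
end
end

section
/- Let ε > 0 and let A be a nonempty subset of the Euclidean plane ℝ². Then A is 2ε-chained if and only if the open ε-neighbourhood O_ε(A) = {p ∈ ℝ² : dist(p, A) < ε} is path-connected. -/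
noncomputable section

theorem stmt_14 (ε : ℝ) (hε : 0 < ε) (A : Set Plane) (hA : A.Nonempty) :
    IsChainedSet (2 * ε) A ↔
      IsPathConnected {p : Plane | Metric.infDist p A < ε} := by
  set O : Set Plane := {p : Plane | Metric.infDist p A < ε} with hO
  have hAO : A ⊆ O := fun a ha => by
    simp only [hO, Set.mem_setOf_eq, Metric.infDist_zero_of_mem ha]; exact hε
  -- joining a point to a nearby point of A by a segment
  have seg : ∀ p a : Plane, a ∈ A → dist p a < ε → JoinedIn O p a := by
    intro p a ha hpa
    have hsub : segment ℝ p a ⊆ O := by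
      intro x hx
      have hx' : x ∈ Metric.closedBall a (dist p a) :=
        (convex_closedBall a (dist p a)).segment_subset
          (by simp [Metric.mem_closedBall])
          (by simp [Metric.mem_closedBall, dist_self, dist_nonneg]) hx
      have : Metric.infDist x A ≤ dist x a := Metric.infDist_le_dist_of_mem ha
      exact lt_of_le_of_lt (this.trans (Metric.mem_closedBall.mp hx')) hpa
    have hconv : IsPathConnected (segment ℝ p a) :=
      (convex_segment p a).isPathConnected ⟨p, left_mem_segment ℝ p a⟩
    exact (hconv.joinedIn p (left_mem_segment ℝ p a) a (right_mem_segment ℝ p a)).mono hsub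
  -- joining two 2ε-close points of A
  have joinAA : ∀ a b : Plane, a ∈ A → b ∈ A → dist a b < 2 * ε → JoinedIn O a b := by
    intro a b ha hb hab
    set m := midpoint ℝ a b
    have h2 : ‖(2:ℝ)‖ = 2 := by norm_num
    have hma : dist m a < ε := by
      rw [dist_midpoint_left, h2]; linarith
    have hmb : dist m b < ε := by
      rw [dist_midpoint_right, h2]; linarith
    exact ((seg m a ha hma).symm).trans (seg m b hb hmb)
  constructor
  · intro hch
    obtain ⟨a₀, ha₀⟩ := id hA
    refine ⟨a₀, hAO ha₀, ?_⟩
    intro y hy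
    have hy' : Metric.infDist y A < ε := hy
    obtain ⟨b, hb, hyb⟩ := (Metric.infDist_lt_iff hA).mp hy'
    obtain ⟨n, r, hrA, hr0, hrl, hrd⟩ := hch a₀ ha₀ b hb
    have key : ∀ i : Fin (n + 1), JoinedIn O (r 0) (r i) := by
      intro i
      induction i using Fin.induction with
      | zero => exact JoinedIn.refl (hAO (hrA 0))
      | succ i ih =>
          exact ih.trans (joinAA _ _ (hrA i.castSucc) (hrA i.succ) (hrd i))
    have h1 : JoinedIn O a₀ b := by rw [← hr0, ← hrl]; exact key (Fin.last n)
    exact h1.trans (seg y b hb hyb).symm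
  · intro hpc p hp q hq
    have hjoin : JoinedIn O p q := hpc.joinedIn p (hAO hp) q (hAO hq)
    obtain ⟨γ, hγ⟩ := hjoin
    -- max of infDist along the path
    have hcont : Continuous fun t : unitInterval => Metric.infDist (γ t) A :=
      (Metric.continuous_infDist_pt A).comp γ.continuous
    obtain ⟨t₀, -, ht₀⟩ := isCompact_univ.exists_isMaxOn (Set.univ_nonempty)
      hcont.continuousOn
    set c := Metric.infDist (γ t₀) A with hc
    have hcε : c < ε := hγ t₀
    have hc0 : 0 ≤ c := Metric.infDist_nonneg
    have hub : ∀ t, Metric.infDist (γ t) A ≤ c := fun t => ht₀ (Set.mem_univ t)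
    set κ := (ε - c) / 3 with hκ
    have hκ0 : 0 < κ := by rw [hκ]; linarith
    -- uniform continuity
    have huc : UniformContinuous (γ : unitInterval → Plane) :=
      CompactSpace.uniformContinuous_of_continuous γ.continuous
    obtain ⟨δ, hδ0, hδ⟩ := Metric.uniformContinuous_iff.mp huc κ hκ0
    obtain ⟨n, hn⟩ := exists_nat_one_div_lt hδ0
    set N := n + 1 with hN
    have hN0 : (0 : ℝ) < N := by exact_mod_cast Nat.succ_pos n
    have hNδ : 1 / (N : ℝ) < δ := by exact_mod_cast hn
    -- subdivision points
    have tmem : ∀ i : Fin (N + 1), (i : ℝ) / N ∈ unitInterval := by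
      intro i
      constructor
      · positivity
      · rw [div_le_one hN0]
        exact_mod_cast Nat.le_of_lt_succ i.isLt
    set t : Fin (N + 1) → unitInterval := fun i => ⟨(i : ℝ) / N, tmem i⟩ with ht
    -- pick approximating points in A
    have hpick : ∀ i : Fin (N + 1), ∃ a ∈ A, dist (γ (t i)) a < c + κ :=
      fun i => (Metric.infDist_lt_iff hA).mp (lt_of_le_of_lt (hub (t i)) (by linarith))
    choose a haA hadist using hpick
    refine ⟨N, fun i => if i = 0 then p else if i = Fin.last N then q else a i, ?_, ?_, ?_, ?_⟩
    · intro i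
      by_cases h0 : i = 0
      · simpa [h0] using hp
      · by_cases hl : i = Fin.last N
        · simp [h0, hl]; exact hq
        · simp [h0, hl]; exact haA i
    · simp
    · have : Fin.last N ≠ 0 := by
        simp [Fin.ext_iff, hN]
      simp [this]
    · intro i
      have hclose : ∀ j : Fin (N + 1),
          dist (γ (t j)) (if j = 0 then p else if j = Fin.last N then q else a j) < c + κ := by
        intro j
        by_cases h0 : j = 0
        · subst h0
          have htj : t 0 = 0 := Subtype.ext (by simp [ht])
          simp [htj]
          linarith
        · by_cases hl : j = Fin.last N
          · subst hl
            have hlast : (Fin.last N) ≠ (0 : Fin (N + 1)) := by simp [Fin.ext_iff, hN]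
            have htj : t (Fin.last N) = 1 :=
              Subtype.ext (by simp [ht, Fin.val_last, div_self (ne_of_gt hN0)])
            simp [hlast, htj]
            linarith
          · simp only [h0, hl, if_false]
            exact hadist j
      have hstep : dist (γ (t i.castSucc)) (γ (t i.succ)) < κ := by
        apply hδ
        rw [Subtype.dist_eq, Real.dist_eq]
        have hval : ((t i.castSucc : ℝ)) - ((t i.succ : ℝ)) = -(1/N) := by
          simp only [ht, Fin.coe_castSucc, Fin.val_succ]
          push_cast
          field_simp
          ring
        rw [hval, abs_neg, abs_of_nonneg (by positivity)]
        exact hNδ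
      calc dist (if i.castSucc = 0 then p else if i.castSucc = Fin.last N then q else a i.castSucc)
            (if i.succ = 0 then p else if i.succ = Fin.last N then q else a i.succ)
          ≤ dist _ (γ (t i.castSucc)) + dist (γ (t i.castSucc)) (γ (t i.succ))
              + dist (γ (t i.succ)) _ := dist_triangle4 _ _ _ _
        _ < (c + κ) + κ + (c + κ) := by
            gcongr
            · rw [dist_comm]; exact hclose i.castSucc
            · exact hclose i.succ
        _ ≤ 2 * ε := by
            have : 3 * κ = ε - c := by rw [hκ]; ring
            linarith
end
end

section
/- Let ε > 0 and let A be a nonempty bounded subset of the Euclidean plane ℝ². Then the closed ε-neighbourhood B_ε(A) = {p ∈ ℝ² : dist(p, A) ≤ ε}, viewed as a topological subspace of ℝ², is a compact, locally connected space. -/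
noncomputable section

open Metric Set Bornology AffineMap Filter Topology

private lemma min_div_mul_aux {δ d : ℝ} (hδ : 0 < δ) (hd : 0 ≤ d) :
    min (δ / (2 * d)) 1 * d = min (δ / 2) d := by
  rcases eq_or_lt_of_le hd with h | h
  · rw [← h]
    simp [min_eq_right (by positivity : (0:ℝ) ≤ δ/2)]
  · rw [min_mul_of_nonneg _ _ hd, one_mul]
    congr 1
    field_simp

/-- Key lemma: the connected component of `p` in `B ∩ closedBall p δ` is a neighbourhood
of `p` within `B`, where `B` is the closed `ε`-neighbourhood of `A`. -/
private lemma key_nbhd {ε δ : ℝ} {A : Set Plane} (hA : A.Nonempty)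
    (hbdd : Bornology.IsBounded A) (hδ : 0 < δ) (hδε : δ ≤ ε) {p : Plane}
    (hp : Metric.infDist p A ≤ ε) :
    ∃ r > 0, {q : Plane | Metric.infDist q A ≤ ε} ∩ Metric.ball p r ⊆
      connectedComponentIn
        ({q : Plane | Metric.infDist q A ≤ ε} ∩ Metric.closedBall p δ) p := by
  set B : Set Plane := {q : Plane | Metric.infDist q A ≤ ε} with hBdef
  set S : Set Plane := B ∩ Metric.closedBall p δ with hSdef
  set V : Set Plane := connectedComponentIn S p with hVdef
  have hε : 0 < ε := hδ.trans_le hδε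
  have hAc : IsCompact (closure A) := hbdd.isCompact_closure
  have hAcne : (closure A).Nonempty := hA.closure
  have hballB : ∀ a ∈ closure A, Metric.closedBall a ε ⊆ B := by
    intro a ha x hx
    have h1 : Metric.infDist x (closure A) ≤ dist x a := Metric.infDist_le_dist_of_mem ha
    rw [Metric.infDist_closure] at h1
    exact h1.trans hx
  have hwit : ∀ q ∈ B, ∃ a ∈ closure A, dist q a ≤ ε := by
    intro q hq
    obtain ⟨a, ha, hda⟩ := hAc.exists_infDist_eq_dist hAcne q
    exact ⟨a, ha, by rw [← hda, Metric.infDist_closure]; exact hq⟩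
  by_contra hcon
  push_neg at hcon
  have hex : ∀ n : ℕ, ∃ q, (q ∈ B ∧ dist q p < min (1 / ((n : ℝ) + 1)) (δ / 2)) ∧ q ∉ V := by
    intro n
    have hpos : 0 < min (1 / ((n : ℝ) + 1)) (δ / 2) := lt_min (by positivity) (by positivity)
    obtain ⟨q, hq1, hq2⟩ := Set.not_subset.mp (hcon _ hpos)
    exact ⟨q, ⟨hq1.1, by simpa [Metric.mem_ball] using hq1.2⟩, hq2⟩
  choose q hq using hex
  have hqB : ∀ n, q n ∈ B := fun n => (hq n).1.1
  have hqd : ∀ n, dist (q n) p < min (1 / ((n : ℝ) + 1)) (δ / 2) := fun n => (hq n).1.2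
  have hqV : ∀ n, q n ∉ V := fun n => (hq n).2
  choose a haA hqa using fun n => hwit (q n) (hqB n)
  have hqp : Filter.Tendsto q Filter.atTop (nhds p) := by
    rw [tendsto_iff_dist_tendsto_zero]
    refine squeeze_zero (fun n => dist_nonneg) (fun n => (hqd n).le.trans (min_le_left _ _)) ?_
    exact tendsto_one_div_add_atTop_nhds_zero_nat
  set d : ℕ → ℝ := fun n => dist (q n) (a n) with hd
  set s : ℕ → ℝ := fun n => min (δ / (2 * d n)) 1 with hs
  set m : ℕ → Plane := fun n => AffineMap.lineMap (q n) (a n) (s n) with hm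
  have hs0 : ∀ n, 0 ≤ s n := fun n => le_min (by positivity) zero_le_one
  have hs1 : ∀ n, s n ≤ 1 := fun n => min_le_right _ _
  have hsd : ∀ n, s n * d n = min (δ / 2) (d n) := fun n => min_div_mul_aux hδ dist_nonneg
  have hdqm : ∀ n, dist (q n) (m n) = min (δ / 2) (d n) := by
    intro n
    rw [hm, dist_left_lineMap, Real.norm_eq_abs, abs_of_nonneg (hs0 n), ← hsd n]
  have hma : ∀ n, dist (m n) (a n) ≤ d n := by
    intro n
    rw [hm, dist_lineMap_right, Real.norm_eq_abs, abs_of_nonneg (by linarith [hs1 n])]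
    nlinarith [hs0 n, dist_nonneg (x := q n) (y := a n)]
  have hqS : ∀ n, q n ∈ S := by
    intro n
    refine ⟨hqB n, Metric.mem_closedBall.mpr ?_⟩
    have := (hqd n).le.trans (min_le_right _ _)
    linarith
  have hsegS : ∀ n, segment ℝ (q n) (m n) ⊆ S := by
    intro n
    refine Set.subset_inter ?_ ?_
    · refine subset_trans ?_ (hballB (a n) (haA n))
      refine (convex_closedBall (a n) ε).segment_subset ?_ ?_
      · exact Metric.mem_closedBall.mpr (hqa n)
      · exact Metric.mem_closedBall.mpr ((hma n).trans (hqa n))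
    · refine (convex_closedBall p δ).segment_subset ?_ ?_
      · exact Metric.mem_closedBall.mpr (((hqd n).le.trans (min_le_right _ _)).trans (by linarith))
      · refine Metric.mem_closedBall.mpr ?_
        have h1 : dist (m n) p ≤ dist (m n) (q n) + dist (q n) p := dist_triangle _ _ _
        have h2 : dist (m n) (q n) ≤ δ / 2 := by
          rw [dist_comm, hdqm n]; exact min_le_left _ _
        have h3 : dist (q n) p ≤ δ / 2 := (hqd n).le.trans (min_le_right _ _)
        linarith
  have hmV : ∀ n, m n ∉ V := by
    intro n hmem
    have hm_in : m n ∈ connectedComponentIn S (q n) :=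
      (convex_segment (q n) (m n)).isPreconnected.subset_connectedComponentIn
        (left_mem_segment ℝ _ _) (hsegS n) (right_mem_segment ℝ _ _)
    have e1 : connectedComponentIn S p = connectedComponentIn S (m n) :=
      connectedComponentIn_eq hmem
    have e2 : connectedComponentIn S (q n) = connectedComponentIn S (m n) :=
      connectedComponentIn_eq hm_in
    exact hqV n (by
      rw [hVdef, e1, ← e2]
      exact mem_connectedComponentIn (hqS n))
  -- pass to a convergent subsequence of the `a n`
  obtain ⟨α, hαA, φ, hφ, hαconv⟩ := hAc.tendsto_subseq haA
  have hqφ : Filter.Tendsto (fun n => q (φ n)) Filter.atTop (nhds p) :=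
    hqp.comp hφ.tendsto_atTop
  have hdφ : Filter.Tendsto (fun n => d (φ n)) Filter.atTop (nhds (dist p α)) :=
    hqφ.dist hαconv
  set D : ℝ := dist p α with hD
  have hDε : D ≤ ε := le_of_tendsto hdφ (Filter.Eventually.of_forall fun n => hqa (φ n))
  set σ : ℝ := min (δ / (2 * D)) 1 with hσ
  have hσ0 : 0 ≤ σ := le_min (by positivity) zero_le_one
  have hσ1 : σ ≤ 1 := min_le_right _ _
  have hσD : σ * D = min (δ / 2) D := min_div_mul_aux hδ dist_nonneg
  set M : Plane := AffineMap.lineMap p α σ with hM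
  have hMconv : Filter.Tendsto (fun n => m (φ n)) Filter.atTop (nhds M) := by
    rcases eq_or_lt_of_le (dist_nonneg : 0 ≤ D) with h0 | h0
    · -- D = 0 : α = p and m (φ n) → p = M
      have hαp : α = p := by
        have h0' : dist p α = 0 := h0.symm
        exact (dist_eq_zero.mp h0').symm
      have hMp : M = p := by rw [hM, hαp, AffineMap.lineMap_same_apply]
      rw [hMp, tendsto_iff_dist_tendsto_zero]
      refine squeeze_zero (g := fun n => d (φ n) + dist (q (φ n)) p)
        (fun n => dist_nonneg) (fun n => ?_) ?_
      · show dist (m (φ n)) p ≤ d (φ n) + dist (q (φ n)) p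
        have h2 : dist (m (φ n)) (q (φ n)) ≤ d (φ n) := by
          rw [dist_comm, hdqm _]; exact min_le_right _ _
        linarith [dist_triangle (m (φ n)) (q (φ n)) p]
      · have h1 : Filter.Tendsto (fun n => d (φ n) + dist (q (φ n)) p)
            Filter.atTop (nhds (0 + 0)) := by
          refine Filter.Tendsto.add ?_ ?_
          · rw [hD, hαp, dist_self] at hdφ; exact hdφ
          · exact tendsto_iff_dist_tendsto_zero.mp hqφ
        simpa using h1
    · -- D > 0 : everything is continuous
      have hsφ : Filter.Tendsto (fun n => s (φ n)) Filter.atTop (nhds σ) := by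
        refine Filter.Tendsto.min ?_ tendsto_const_nhds
        exact tendsto_const_nhds.div (hdφ.const_mul 2) (by positivity)
      have heq : ∀ n, m (φ n) = s (φ n) • (a (φ n) - q (φ n)) + q (φ n) := by
        intro n; rw [hm]; exact AffineMap.lineMap_apply_module' _ _ _
      have heqM : M = σ • (α - p) + p := AffineMap.lineMap_apply_module' _ _ _
      rw [heqM]
      simp only [heq]
      exact (hsφ.smul (hαconv.sub hqφ)).add hqφ
  have hMp : dist p M = min (δ / 2) D := by
    rw [hM, dist_left_lineMap, Real.norm_eq_abs, abs_of_nonneg hσ0, ← hσD, hD]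
  have hMa : dist M α = D - min (δ / 2) D := by
    rw [hM, dist_lineMap_right, Real.norm_eq_abs, abs_of_nonneg (by linarith), ← hD]
    rw [← hσD]; ring
  have hMint : Metric.infDist M A < ε := by
    have h1 : Metric.infDist M (closure A) ≤ dist M α := Metric.infDist_le_dist_of_mem hαA
    rw [Metric.infDist_closure] at h1
    rw [hMa] at h1
    rcases eq_or_lt_of_le (dist_nonneg : 0 ≤ D) with h0 | h0
    · have : min (δ / 2) D = D := min_eq_right (h0.symm.le.trans (by positivity))
      rw [this] at h1; simpa using lt_of_le_of_lt (by linarith : Metric.infDist M A ≤ 0) hε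
    · have hmin : 0 < min (δ / 2) D := lt_min (by positivity) h0
      have : D - min (δ / 2) D < D := by linarith
      linarith
  have hMV : M ∈ V := by
    have hsub : segment ℝ p M ⊆ S := by
      refine Set.subset_inter ?_ ?_
      · refine subset_trans ?_ (hballB α hαA)
        refine (convex_closedBall α ε).segment_subset ?_ ?_
        · exact Metric.mem_closedBall.mpr hDε
        · refine Metric.mem_closedBall.mpr ?_
          rw [hMa]
          have : 0 ≤ min (δ / 2) D := le_min (by positivity) dist_nonneg
          linarith
      · refine (convex_closedBall p δ).segment_subset (Metric.mem_closedBall_self hδ.le) ?_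
        refine Metric.mem_closedBall.mpr ?_
        rw [dist_comm, hMp]
        exact (min_le_left _ _).trans (by linarith)
    exact (convex_segment p M).isPreconnected.subset_connectedComponentIn
      (left_mem_segment ℝ _ _) hsub (right_mem_segment ℝ _ _)
  -- an open ball around M inside S, contained in V
  have hO : IsOpen {x : Plane | Metric.infDist x A < ε} :=
    isOpen_lt (Metric.continuous_infDist_pt A) continuous_const
  obtain ⟨r, hr, hrsub⟩ := Metric.isOpen_iff.mp hO M hMint
  set r' : ℝ := min r (δ / 2) with hr'def
  have hr' : 0 < r' := lt_min hr (by positivity)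
  have hballS : Metric.ball M r' ⊆ S := by
    intro x hx
    have hlt : Metric.infDist x A < ε := hrsub (Metric.ball_subset_ball (min_le_left _ _) hx)
    refine ⟨hlt.le, ?_⟩
    refine Metric.mem_closedBall.mpr ?_
    have h1 : dist x M < δ / 2 := lt_of_lt_of_le hx (min_le_right _ _)
    have h2 : dist M p ≤ δ / 2 := by
      rw [dist_comm, hMp]; exact min_le_left _ _
    calc dist x p ≤ dist x M + dist M p := dist_triangle _ _ _
      _ ≤ δ := by linarith
  have hballV : Metric.ball M r' ⊆ V := by
    have h1 : Metric.ball M r' ⊆ connectedComponentIn S M :=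
      (convex_ball M r').isPreconnected.subset_connectedComponentIn
        (Metric.mem_ball_self hr') hballS
    rwa [← connectedComponentIn_eq hMV] at h1
  have hev : ∀ᶠ n in Filter.atTop, m (φ n) ∈ Metric.ball M r' :=
    hMconv (Metric.ball_mem_nhds M hr')
  obtain ⟨n, hn⟩ := hev.exists
  exact hmV (φ n) (hballV hn)

theorem stmt_15 (ε : ℝ) (hε : 0 < ε) (A : Set Plane) (hA : A.Nonempty)
    (hbdd : Bornology.IsBounded A) :
    CompactSpace ({p : Plane | Metric.infDist p A ≤ ε} : Set Plane) ∧
    LocallyConnectedSpace ({p : Plane | Metric.infDist p A ≤ ε} : Set Plane) := by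
  set B : Set Plane := {p : Plane | Metric.infDist p A ≤ ε} with hBdef
  have hBclosed : IsClosed B := isClosed_le (Metric.continuous_infDist_pt A) continuous_const
  have hBbdd : Bornology.IsBounded B := by
    obtain ⟨a₀, ha₀⟩ := hA
    obtain ⟨R, hR⟩ := hbdd.subset_closedBall a₀
    refine (Metric.isBounded_closedBall (x := a₀) (r := ε + 1 + R)).subset ?_
    intro x hx
    have h1 : Metric.infDist x A < ε + 1 := lt_of_le_of_lt hx (by linarith)
    obtain ⟨y, hy, hxy⟩ := (Metric.infDist_lt_iff ⟨a₀, ha₀⟩).mp h1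
    have h2 : dist y a₀ ≤ R := Metric.mem_closedBall.mp (hR hy)
    exact Metric.mem_closedBall.mpr
      ((dist_triangle x y a₀).trans (by linarith))
  have hBcompact : IsCompact B := Metric.isCompact_of_isClosed_isBounded hBclosed hBbdd
  refine ⟨isCompact_iff_compactSpace.mp hBcompact, ?_⟩
  rw [locallyConnectedSpace_iff_connected_subsets]
  intro x U hU
  obtain ⟨δ', hδ', hδ'sub⟩ := Metric.mem_nhds_iff.mp hU
  set δ : ℝ := min (δ' / 2) ε with hδdef
  have hδpos : 0 < δ := lt_min (by positivity) hε
  have hδε : δ ≤ ε := min_le_right _ _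
  obtain ⟨r, hr, hrsub⟩ := key_nbhd hA hbdd hδpos hδε x.2
  set W : Set Plane := connectedComponentIn (B ∩ Metric.closedBall (x : Plane) δ) (x : Plane)
    with hWdef
  have hWsub : W ⊆ B ∩ Metric.closedBall (x : Plane) δ := connectedComponentIn_subset _ _
  refine ⟨Subtype.val ⁻¹' W, ?_, ?_, ?_⟩
  · -- W's preimage is a neighbourhood of x
    have hop : IsOpen (Subtype.val ⁻¹' (Metric.ball (x : Plane) r) : Set B) :=
      Metric.isOpen_ball.preimage continuous_subtype_val
    refine Filter.mem_of_superset (hop.mem_nhds ?_) ?_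
    · exact Metric.mem_ball_self hr
    · intro y hy
      exact hrsub ⟨y.2, hy⟩
  · -- preconnected
    have himg : Subtype.val '' (Subtype.val ⁻¹' W : Set B) = W := by
      rw [Subtype.image_preimage_coe]
      exact Set.inter_eq_right.mpr (hWsub.trans Set.inter_subset_left)
    rw [← Topology.IsInducing.subtypeVal.isPreconnected_image, himg]
    exact isPreconnected_connectedComponentIn
  · -- contained in U
    intro y hy
    have h1 : dist (y : Plane) (x : Plane) ≤ δ :=
      Metric.mem_closedBall.mp (hWsub hy).2
    refine hδ'sub ?_
    rw [Metric.mem_ball, Subtype.dist_eq]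
    have : δ ≤ δ' / 2 := min_le_left _ _
    linarith
end
end

section
/- Let ε > 0 and let A be a nonempty bounded 2ε-chained subset of the Euclidean plane ℝ². Then for every point r in the closed ε-neighbourhood B_ε(A) = {p ∈ ℝ² : dist(p, A) ≤ ε}, the set B_ε(A) \ {r} is path-connected. In particular, B_ε(A) is path-connected and has no cut points. -/
noncomputable section

section Stmt16AuxSec
open Metric Set
namespace Stmt16Aux


lemma exists_perp_unit (v : Plane) (hv : v ≠ 0) :
    ∃ u : Plane, ‖u‖ = 1 ∧ ∀ t : ℝ, u ≠ t • v := by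
  have hvc : v 0 ≠ 0 ∨ v 1 ≠ 0 := by
    by_contra h
    push_neg at h
    apply hv
    ext i
    fin_cases i <;> simp [h.1, h.2]
  set u0 : Plane := (WithLp.equiv 2 (Fin 2 → ℝ)).symm ![-(v 1), v 0] with hu0def
  have hu0span : ∀ t : ℝ, u0 ≠ t • v := by
    intro t h
    have e0 : -(v 1) = t * v 0 := by rw [show -(v 1) = u0 0 from rfl, h]; rfl
    have e1 : v 0 = t * v 1 := by rw [show v 0 = u0 1 from rfl, h]; rfl
    have key : v 1 * (1 + t ^ 2) = 0 := by linear_combination -e0 - t * e1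
    have h1 : v 1 = 0 := by
      rcases mul_eq_zero.1 key with h' | h'
      · exact h'
      · nlinarith [sq_nonneg t]
    have h0 : v 0 = 0 := by rw [e1, h1, mul_zero]
    rcases hvc with h' | h' <;> [exact h' h0; exact h' h1]
  have hu0ne : u0 ≠ 0 := by
    intro h
    exact hu0span 0 (by rw [h, zero_smul])
  have hn : ‖u0‖ ≠ 0 := norm_ne_zero_iff.2 hu0ne
  refine ⟨‖u0‖⁻¹ • u0, ?_, ?_⟩
  · rw [norm_smul, norm_inv, norm_norm, inv_mul_cancel₀ hn]
  · intro t h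
    apply hu0span (‖u0‖ * t)
    calc u0 = ‖u0‖ • (‖u0‖⁻¹ • u0) := by rw [smul_smul, mul_inv_cancel₀ hn, one_smul]
    _ = ‖u0‖ • (t • v) := by rw [h]
    _ = (‖u0‖ * t) • v := by rw [smul_smul]

lemma joinedIn_closedBall_diff (c : Plane) {s : ℝ} (hs : 0 < s) (r : Plane) {x y : Plane}
    (hx : x ∈ closedBall c s) (hxr : x ≠ r) (hy : y ∈ closedBall c s) (hyr : y ≠ r) :
    JoinedIn (closedBall c s \ {r}) x y := by
  have hK : Convex ℝ (closedBall c s) := convex_closedBall c s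
  by_cases hr : r ∈ segment ℝ x y
  · -- r is on the segment; go around via a perpendicular direction
    have hxy : x ≠ y := by
      rintro rfl
      rw [segment_same] at hr
      exact hxr (mem_singleton_iff.1 hr).symm
    have hv : y - x ≠ 0 := sub_ne_zero.2 (Ne.symm hxy)
    obtain ⟨u, hu1, hu⟩ := exists_perp_unit (y - x) hv
    obtain ⟨θ, hθI, hθeq⟩ := by rw [segment_eq_image'] at hr; exact hr
    have mem1 : c + s • u ∈ closedBall c s := by
      rw [mem_closedBall, dist_self_add_left, norm_smul, hu1, mul_one, Real.norm_eq_abs,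
        abs_of_pos hs]
    have mem2 : c - s • u ∈ closedBall c s := by
      rw [mem_closedBall, sub_eq_add_neg, dist_self_add_left, norm_neg, norm_smul, hu1, mul_one,
        Real.norm_eq_abs, abs_of_pos hs]
    have hzex : ∃ z ∈ closedBall c s, ∀ t : ℝ, z - x ≠ t • (y - x) := by
      by_contra hcon
      push_neg at hcon
      obtain ⟨t₁, ht₁⟩ := hcon (c + s • u) mem1
      obtain ⟨t₂, ht₂⟩ := hcon (c - s • u) mem2
      have key : (2 * s) • u = (t₁ - t₂) • (y - x) := by
        linear_combination (norm := module) ht₁ - ht₂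
      have h2s : (2 * s : ℝ) ≠ 0 := by positivity
      apply hu ((t₁ - t₂) / (2 * s))
      calc u = (2 * s)⁻¹ • ((2 * s) • u) := by rw [smul_smul, inv_mul_cancel₀ h2s, one_smul]
      _ = (2 * s)⁻¹ • ((t₁ - t₂) • (y - x)) := by rw [key]
      _ = ((t₁ - t₂) / (2 * s)) • (y - x) := by rw [smul_smul, div_eq_inv_mul]
    obtain ⟨z, hzK, hz⟩ := hzex
    have hrxz : r ∉ segment ℝ x z := by
      rw [segment_eq_image']
      rintro ⟨t, htI, hteq⟩
      rcases eq_or_ne t 0 with rfl | ht0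
      · exact hxr (by simpa using hteq)
      · apply hz (t⁻¹ * θ)
        have he : t • (z - x) = θ • (y - x) := by
          have h2 := hteq.trans hθeq.symm
          linear_combination (norm := module) h2
        calc z - x = t⁻¹ • (t • (z - x)) := by rw [smul_smul, inv_mul_cancel₀ ht0, one_smul]
        _ = t⁻¹ • (θ • (y - x)) := by rw [he]
        _ = (t⁻¹ * θ) • (y - x) := by rw [smul_smul]
    have hrzy : r ∉ segment ℝ z y := by
      rw [segment_eq_image']
      rintro ⟨t, htI, hteq⟩
      rcases eq_or_ne t 1 with rfl | ht1
      · exact hyr (by simpa using hteq)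
      · have h1t : (1 - t : ℝ) ≠ 0 := sub_ne_zero.2 (Ne.symm ht1)
        apply hz ((θ - t) / (1 - t))
        have he : (1 - t) • (z - x) = (θ - t) • (y - x) := by
          have h2 := hteq.trans hθeq.symm
          linear_combination (norm := module) h2
        calc z - x = (1 - t)⁻¹ • ((1 - t) • (z - x)) := by
              rw [smul_smul, inv_mul_cancel₀ h1t, one_smul]
        _ = (1 - t)⁻¹ • ((θ - t) • (y - x)) := by rw [he]
        _ = ((θ - t) / (1 - t)) • (y - x) := by rw [smul_smul, div_eq_inv_mul]
    have hj1 : JoinedIn (closedBall c s \ {r}) x z :=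
      JoinedIn.of_segment_subset fun w hw =>
        ⟨hK.segment_subset hx hzK hw, by
          simp only [mem_singleton_iff]; rintro rfl; exact hrxz hw⟩
    have hj2 : JoinedIn (closedBall c s \ {r}) z y :=
      JoinedIn.of_segment_subset fun w hw =>
        ⟨hK.segment_subset hzK hy hw, by
          simp only [mem_singleton_iff]; rintro rfl; exact hrzy hw⟩
    exact hj1.trans hj2
  · exact JoinedIn.of_segment_subset fun w hw =>
      ⟨hK.segment_subset hx hy hw, by
        simp only [mem_singleton_iff]; rintro rfl; exact hr hw⟩

lemma exists_common {ε : ℝ} (hε : 0 < ε) (r c d : Plane) (h : dist c d < 2 * ε) :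
    ∃ j, j ∈ closedBall c ε ∧ j ∈ closedBall d ε ∧ j ≠ r := by
  set m := midpoint ℝ c d with hm
  have hmc : dist m c = dist c d / 2 := by
    rw [hm, dist_midpoint_left]; norm_num; ring
  have hmd : dist m d = dist c d / 2 := by
    rw [hm, dist_midpoint_right]; norm_num; ring
  have hdd : (0 : ℝ) ≤ dist c d := dist_nonneg
  have hlt : dist c d / 2 < ε := by linarith
  by_cases hmr : m = r
  · set δ := ε - dist c d / 2 with hδdef
    have hδ : 0 < δ := by simp only [hδdef]; linarith
    set j := m + (δ / 2) • EuclideanSpace.single (0 : Fin 2) (1 : ℝ) with hj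
    have hjm : dist j m = δ / 2 := by
      rw [hj, dist_self_add_left, norm_smul, EuclideanSpace.norm_single, norm_one, mul_one,
        Real.norm_eq_abs, abs_of_pos (by linarith)]
    refine ⟨j, ?_, ?_, ?_⟩
    · rw [mem_closedBall]
      calc dist j c ≤ dist j m + dist m c := dist_triangle _ _ _
      _ = δ / 2 + dist c d / 2 := by rw [hjm, hmc]
      _ ≤ ε := by simp only [hδdef]; linarith
    · rw [mem_closedBall]
      calc dist j d ≤ dist j m + dist m d := dist_triangle _ _ _
      _ = δ / 2 + dist c d / 2 := by rw [hjm, hmd]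
      _ ≤ ε := by simp only [hδdef]; linarith
    · rw [← hmr]
      intro hjm'
      rw [hjm'] at hjm
      rw [dist_self] at hjm
      linarith
  · exact ⟨m, by rw [mem_closedBall, hmc]; linarith,
      by rw [mem_closedBall, hmd]; linarith, hmr⟩

lemma ball_subset_B {A : Set Plane} {ε : ℝ} {c : Plane} (hc : c ∈ closure A) :
    closedBall c ε ⊆ {p : Plane | infDist p A ≤ ε} := by
  intro x hx
  simp only [mem_setOf_eq]
  rw [← infDist_closure]
  exact le_trans (infDist_le_dist_of_mem hc) (mem_closedBall.1 hx)

lemma anchor {ε : ℝ} (hε : 0 < ε) {A : Set Plane} (hA : A.Nonempty)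
    (hbdd : Bornology.IsBounded A) (r p : Plane)
    (hp : p ∈ {p : Plane | infDist p A ≤ ε}) (hpr : p ≠ r) :
    ∃ a ∈ A, ∃ j, (j ∈ closedBall a ε ∧ j ≠ r) ∧
      JoinedIn ({p : Plane | infDist p A ≤ ε} \ {r}) p j := by
  have hcomp : IsCompact (closure A) := hbdd.isCompact_closure
  obtain ⟨c, hcA, hcd⟩ := hcomp.exists_infDist_eq_dist hA.closure p
  have hpc : dist p c ≤ ε := by
    rw [← hcd, infDist_closure]
    exact hp
  obtain ⟨a, haA, hca⟩ := Metric.mem_closure_iff.1 hcA ε hε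
  obtain ⟨j, hjc, hja, hjr⟩ := exists_common hε r c a (by linarith)
  have hJ : JoinedIn (closedBall c ε \ {r}) p j :=
    joinedIn_closedBall_diff c hε r (mem_closedBall.2 hpc) hpr hjc hjr
  exact ⟨a, haA, j, ⟨hja, hjr⟩,
    hJ.mono (diff_subset_diff_left (ball_subset_B hcA))⟩




lemma main_joined {ε : ℝ} (hε : 0 < ε) {A : Set Plane} (hA : A.Nonempty)
    (hbdd : Bornology.IsBounded A) (hch : IsChainedSet (2 * ε) A) (r : Plane) {p q : Plane}
    (hp : p ∈ {p : Plane | Metric.infDist p A ≤ ε} \ {r})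
    (hq : q ∈ {p : Plane | Metric.infDist p A ≤ ε} \ {r}) :
    JoinedIn ({p : Plane | Metric.infDist p A ≤ ε} \ {r}) p q := by
  set S := {p : Plane | Metric.infDist p A ≤ ε} \ {r} with hS
  obtain ⟨a, haA, j₁, ⟨hj₁a, hj₁r⟩, hJ₁⟩ := anchor hε hA hbdd r p hp.1 hp.2
  obtain ⟨b, hbA, j₂, ⟨hj₂b, hj₂r⟩, hJ₂⟩ := anchor hε hA hbdd r q hq.1 hq.2
  obtain ⟨n, rr, hrrA, hrr0, hrrl, hrrd⟩ := hch a haA b hbA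
  have key : ∀ i : Fin (n + 1), ∃ j, (j ∈ closedBall (rr i) ε ∧ j ≠ r) ∧ JoinedIn S p j := by
    intro i
    induction i using Fin.induction with
    | zero => exact ⟨j₁, ⟨by rw [hrr0]; exact hj₁a, hj₁r⟩, hJ₁⟩
    | succ i ih =>
      obtain ⟨j, ⟨hjmem, hjr⟩, hJ⟩ := ih
      obtain ⟨j', hj'c, hj'd, hj'r⟩ := exists_common hε r (rr i.castSucc) (rr i.succ) (hrrd i)
      have hsub : closedBall (rr i.castSucc) ε \ {r} ⊆ S :=
        diff_subset_diff_left (ball_subset_B (subset_closure (hrrA _)))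
      have hstep : JoinedIn (closedBall (rr i.castSucc) ε \ {r}) j j' :=
        joinedIn_closedBall_diff _ hε r hjmem hjr hj'c hj'r
      exact ⟨j', ⟨hj'd, hj'r⟩, hJ.trans (hstep.mono hsub)⟩
  obtain ⟨j, ⟨hjb, hjr⟩, hJ⟩ := key (Fin.last n)
  rw [hrrl] at hjb
  have hsub : closedBall b ε \ {r} ⊆ S :=
    diff_subset_diff_left (ball_subset_B (subset_closure hbA))
  have h3 : JoinedIn (closedBall b ε \ {r}) j j₂ :=
    joinedIn_closedBall_diff b hε r hjb hjr hj₂b hj₂r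
  exact (hJ.trans (h3.mono hsub)).trans hJ₂.symm

lemma main_pc {ε : ℝ} (hε : 0 < ε) {A : Set Plane} (hA : A.Nonempty)
    (hbdd : Bornology.IsBounded A) (hch : IsChainedSet (2 * ε) A) (r : Plane) :
    IsPathConnected ({p : Plane | Metric.infDist p A ≤ ε} \ {r}) := by
  obtain ⟨a, haA⟩ := hA
  obtain ⟨j, hja, -, hjr⟩ := exists_common hε r a a (by rw [dist_self]; linarith)
  have hjB : j ∈ {p : Plane | Metric.infDist p A ≤ ε} := ball_subset_B (subset_closure haA) hja
  exact ⟨j, ⟨hjB, hjr⟩, fun _ hy => main_joined hε ⟨a, haA⟩ hbdd hch r ⟨hjB, hjr⟩ hy⟩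


end Stmt16Aux
end Stmt16AuxSec

open Metric Set Stmt16Aux in
theorem stmt_16 (ε : ℝ) (hε : 0 < ε) (A : Set Plane) (hA : A.Nonempty)
    (hbdd : Bornology.IsBounded A) (hch : IsChainedSet (2 * ε) A) :
    (∀ r ∈ {p : Plane | Metric.infDist p A ≤ ε},
      IsPathConnected ({p : Plane | Metric.infDist p A ≤ ε} \ {r})) ∧
    IsPathConnected {p : Plane | Metric.infDist p A ≤ ε} := by
  constructor
  · exact fun r _ => main_pc hε hA hbdd hch r
  · -- pick a point r₀ outside the set
    obtain ⟨a, haA⟩ := hA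
    obtain ⟨R, hR⟩ := hbdd.subset_closedBall a
    have hR0 : 0 ≤ R := by
      have := hR haA
      rw [mem_closedBall, dist_self] at this
      exact this
    set r₀ : Plane := a + (R + ε + 2) • EuclideanSpace.single (0 : Fin 2) (1 : ℝ) with hr₀
    have hr₀a : dist r₀ a = R + ε + 2 := by
      rw [hr₀, dist_self_add_left, norm_smul, EuclideanSpace.norm_single, norm_one, mul_one,
        Real.norm_eq_abs, abs_of_pos (by linarith)]
    have hr₀B : r₀ ∉ {p : Plane | Metric.infDist p A ≤ ε} := by
      intro h
      simp only [mem_setOf_eq] at h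
      have : Metric.infDist r₀ A < ε + 1 := by linarith
      obtain ⟨y, hyA, hy⟩ := (Metric.infDist_lt_iff ⟨a, haA⟩).1 this
      have hya : dist y a ≤ R := mem_closedBall.1 (hR hyA)
      have := dist_triangle r₀ y a
      rw [hr₀a] at this
      linarith
    have := main_pc hε ⟨a, haA⟩ hbdd hch r₀
    rwa [diff_singleton_eq_self hr₀B] at this
end
end
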